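/- (Pfaff–Saalschütz) For a nonnegative integer n and parameters a, b, c (generic, so that denominators are nonzero): Σ_{m=0}^{n} (a)_m (b)_m (-n)_m / (m! (c)_m (1+a+b-c-n)_m) = (c-a)_n (c-b)_n / ((c)_n (c-a-b)_n). -/

import Mathlib

open Finset
noncomputable def poch (x : ℝ) (m : ℕ) : ℝ := (ascPochhammer ℝ m).eval x

lemma poch_zero (x : ℝ) : poch x 0 = 1 := by simp [poch]

lemma poch_succ (x : ℝ) (m : ℕ) : poch x (m+1) = poch x m * (x + m) := by
  simp [poch, ascPochhammer_succ_eval]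

lemma poch_succ_left (x : ℝ) (m : ℕ) : poch x (m+1) = x * poch (x+1) m := by
  simp [poch, ascPochhammer_succ_left, Polynomial.eval_comp]

lemma poch_add (x : ℝ) (i j : ℕ) : poch x (i+j) = poch x i * poch (x+i) j := by
  rw [poch, ← ascPochhammer_mul]
  simp [poch, Polynomial.eval_comp]

lemma poch_reflect (z : ℝ) : ∀ m : ℕ, poch (-z) m = (-1)^m * poch (z - m + 1) m := by
  intro m
  induction m generalizing z with
  | zero => simp [poch_zero]
  | succ m ih =>
    have h1 : poch (z - (m:ℝ)) (m+1) = (z - m) * poch (z - m + 1) m := poch_succ_left _ m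
    rw [poch_succ, ih]
    push_cast
    rw [show z - ((m:ℝ)+1) + 1 = z - m by ring, h1]
    ring

noncomputable def T (a b c : ℝ) (n m : ℕ) : ℝ :=
  (n.choose m : ℝ) * poch a m * poch b m * poch (c + m) (n - m) * poch (c - a - b) (n - m)

lemma T_top (a b c : ℝ) (n : ℕ) : T a b c n (n+1) = 0 := by
  simp [T, Nat.choose_succ_self]

lemma saalschutz_poly (a b c : ℝ) : ∀ n : ℕ,
    ∑ m ∈ range (n+1), T a b c n m = poch (c - a) n * poch (c - b) n := by
  intro n
  induction n with
  | zero => simp [T, poch_zero]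
  | succ n ih =>
    have key : ∑ m ∈ range (n+2), T a b c (n+1) m
        = (c - a + n) * (c - b + n) * ∑ m ∈ range (n+1), T a b c n m := by
      have hsplit : ∀ m ∈ range (n+1),
          T a b c (n+1) (m+1) = (c + n) * (c - a - b + n - m - 1) * T a b c n (m+1)
            + (n.choose m : ℝ) * poch a (m+1) * poch b (m+1)
              * poch (c + m + 1) (n - m) * poch (c - a - b) (n - m) := by
        intro m hm
        rw [mem_range] at hm
        have hm' : m ≤ n := Nat.lt_succ_iff.mp hm
        by_cases hmn : m = n
        · subst hmn
          rw [T_top]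
          simp only [T]
          rw [show m + 1 - (m+1) = 0 from by omega, show m - m = 0 from by omega,
            Nat.choose_self, Nat.choose_self]
          simp [poch_zero]
        · have hlt : m < n := lt_of_le_of_ne hm' hmn
          obtain ⟨k, hk⟩ : ∃ k, n = m + 1 + k := ⟨n - (m+1), by omega⟩
          subst hk
          simp only [T]
          rw [show m + 1 + k + 1 - (m + 1) = k + 1 from by omega,
              show m + 1 + k - (m + 1) = k from by omega,
              show m + 1 + k - m = k + 1 from by omega,
              show m + 1 + k + 1 = (m + k + 1) + 1 from by omega,
              Nat.choose_succ_succ (m + k + 1) m,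
              show (m + k + 1 : ℕ).choose m = (m + 1 + k : ℕ).choose m from by ring_nf,
              show (m + k + 1 : ℕ).choose (m+1) = (m + 1 + k : ℕ).choose (m+1) from by ring_nf]
          push_cast
          rw [show c + ((m:ℝ)+1) = c + (m:ℝ) + 1 from by ring]
          rw [show poch (c + (m:ℝ) + 1) (k+1)
                = poch (c + (m:ℝ) + 1) k * (c + (m:ℝ) + 1 + k) from poch_succ _ k,
              show poch (c - a - b) (k+1)
                = poch (c - a - b) k * (c - a - b + k) from poch_succ _ k]
          ring
      have hB : ∀ m ∈ range (n+1),
          (c + (n:ℝ)) * (c - a - b + n - m) * T a b c n m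
            + (n.choose m : ℝ) * poch a (m+1) * poch b (m+1)
              * poch (c + m + 1) (n - m) * poch (c - a - b) (n - m)
          = (c - a + n) * (c - b + n) * T a b c n m
            + ((m:ℝ) * (a + b - c - n + m) * T a b c n m
               - ((m+1:ℕ):ℝ) * (a + b - c - n + ((m+1:ℕ):ℝ)) * T a b c n (m+1)) := by
        intro m hm
        rw [mem_range] at hm
        have hm' : m ≤ n := Nat.lt_succ_iff.mp hm
        by_cases hmn : m = n
        · subst hmn
          rw [T_top]
          simp only [T]
          rw [show m - m = 0 from by omega, Nat.choose_self]
          rw [show poch a (m+1) = poch a m * (a + m) from poch_succ a m,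
              show poch b (m+1) = poch b m * (b + m) from poch_succ b m]
          simp only [poch_zero]
          push_cast
          ring
        · have hlt : m < n := lt_of_le_of_ne hm' hmn
          obtain ⟨k, hk⟩ : ∃ k, n = m + 1 + k := ⟨n - (m+1), by omega⟩
          subst hk
          simp only [T]
          rw [show m + 1 + k - (m + 1) = k from by omega,
              show m + 1 + k - m = k + 1 from by omega]
          have hcc : ((m+1+k : ℕ).choose (m+1) : ℝ) * ((m:ℝ)+1)
              = ((m+1+k : ℕ).choose m : ℝ) * ((k:ℝ)+1) := by
            have h0 := Nat.choose_succ_right_eq (m+1+k) m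
            rw [show m + 1 + k - m = k + 1 from by omega] at h0
            exact_mod_cast congrArg (Nat.cast (R := ℝ)) h0
          push_cast
          rw [show c + ((m:ℝ)+1) = c + (m:ℝ) + 1 from by ring]
          rw [show poch (c + (m:ℝ)) (k+1)
                = (c + (m:ℝ)) * poch (c + (m:ℝ) + 1) k from poch_succ_left _ k,
              show poch (c - a - b) (k+1)
                = poch (c - a - b) k * (c - a - b + k) from poch_succ _ k,
              show poch a (m+1) = poch a m * (a + m) from poch_succ a m,
              show poch b (m+1) = poch b m * (b + m) from poch_succ b m,
              show poch (c + (m:ℝ) + 1) (k+1)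
                = poch (c + (m:ℝ) + 1) k * (c + (m:ℝ) + 1 + k) from poch_succ _ k]
          linear_combination (a + b - c - ((m:ℝ)+1+(k:ℝ)) + (m:ℝ) + 1) * poch a m * (a + m)
            * poch b m * (b + m) * poch (c + (m:ℝ) + 1) k * poch (c-a-b) k * hcc
      have hT0 : T a b c (n+1) 0
          = (fun j : ℕ => (c + (n:ℝ)) * (c - a - b + n - j) * T a b c n j) 0 := by
        simp only [T, Nat.choose_zero_right, Nat.sub_zero, poch_zero, Nat.cast_zero,
          Nat.cast_one, add_zero, sub_zero]
        rw [poch_succ c n, poch_succ (c - a - b) n]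
        ring
      have habel : ∀ F : ℕ → ℝ,
          (∑ m ∈ range (n+1), F (m+1)) + F 0 = (∑ m ∈ range (n+1), F m) + F (n+1) := by
        intro F
        rw [← Finset.sum_range_succ' F (n+1), Finset.sum_range_succ]
      have hshift : (∑ m ∈ range (n+1),
            (c + (n:ℝ)) * (c - a - b + n - m - 1) * T a b c n (m+1)) + T a b c (n+1) 0
          = ∑ m ∈ range (n+1), (c + (n:ℝ)) * (c - a - b + n - m) * T a b c n m := by
        have h1 : (∑ m ∈ range (n+1), (c + (n:ℝ)) * (c - a - b + n - m - 1) * T a b c n (m+1))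
            = ∑ m ∈ range (n+1),
              (fun j : ℕ => (c + (n:ℝ)) * (c - a - b + n - j) * T a b c n j) (m+1) := by
          apply Finset.sum_congr rfl
          intro m _
          push_cast
          ring_nf
        have h2 := habel (fun j : ℕ => (c + (n:ℝ)) * (c - a - b + n - j) * T a b c n j)
        rw [T_top, mul_zero] at h2
        rw [h1, hT0, h2, add_zero]
      have hg := Finset.sum_range_sub'
        (fun j : ℕ => (j:ℝ) * (a + b - c - n + j) * T a b c n j) (n+1)
      rw [Finset.sum_range_succ' (fun m => T a b c (n+1) m) (n+1),
        Finset.sum_congr rfl hsplit, Finset.sum_add_distrib, add_right_comm, hshift,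
        ← Finset.sum_add_distrib, Finset.sum_congr rfl hB, Finset.sum_add_distrib, hg,
        T_top]
      push_cast
      rw [← Finset.mul_sum]
      simp
    rw [key, ih,
        show poch (c-a) (n+1) = poch (c-a) n * (c - a + n) from poch_succ _ n,
        show poch (c-b) (n+1) = poch (c-b) n * (c - b + n) from poch_succ _ n]
    ring

lemma poch_neg_nat (n : ℕ) : ∀ m : ℕ, m ≤ n →
    poch (-(n:ℝ)) m = (-1)^m * (m.factorial : ℝ) * (n.choose m : ℝ) := by
  intro m
  induction m with
  | zero => simp [poch_zero]
  | succ m ih =>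
    intro hm
    have hm' : m ≤ n := le_of_lt (Nat.lt_of_succ_le hm)
    have hlt : m < n := Nat.lt_of_succ_le hm
    rw [poch_succ, ih hm']
    have hcc : ((n.choose (m+1) : ℕ) : ℝ) * ((m:ℝ)+1) = (n.choose m : ℝ) * ((n:ℝ) - m) := by
      have h0 := Nat.choose_succ_right_eq n m
      have : ((n.choose (m+1) * (m+1) : ℕ) : ℝ) = ((n.choose m * (n - m) : ℕ) : ℝ) := by
        exact_mod_cast congrArg (Nat.cast (R := ℝ)) h0
      push_cast [Nat.cast_sub hm'] at this
      linarith [this]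
    push_cast [Nat.factorial_succ]
    linear_combination (-1)^m * (m.factorial : ℝ) * hcc

/-- Pfaff–Saalschütz summation for a terminating balanced `₃F₂`. -/
theorem stmt_7 (n : ℕ) (a b c : ℝ)
    (hc : ∀ m : ℕ, m ≤ n → poch c m ≠ 0)
    (hd : ∀ m : ℕ, m ≤ n → poch (1 + a + b - c - n) m ≠ 0)
    (hcn : poch c n ≠ 0) (hcab : poch (c - a - b) n ≠ 0) :
    ∑ m ∈ Finset.range (n + 1),
        poch a m * poch b m * poch (-(n : ℝ)) m /
          ((Nat.factorial m) * poch c m * poch (1 + a + b - c - n) m) =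
      poch (c - a) n * poch (c - b) n / (poch c n * poch (c - a - b) n) := by
  rw [← saalschutz_poly a b c n, Finset.sum_div]
  apply Finset.sum_congr rfl
  intro m hm
  rw [mem_range] at hm
  have hm' : m ≤ n := Nat.lt_succ_iff.mp hm
  have hnm : ((n - m : ℕ) : ℝ) = (n:ℝ) - m := by
    push_cast [Nat.cast_sub hm']; ring
  have hsplitc : poch c n = poch c m * poch (c + m) (n - m) := by
    have h0 := poch_add c m (n - m)
    rwa [Nat.add_sub_cancel' hm'] at h0
  have hsplite : poch (c-a-b) n = poch (c-a-b) (n-m) * poch (c-a-b + ((n:ℝ) - m)) m := by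
    have h0 := poch_add (c-a-b) (n-m) m
    rw [Nat.sub_add_cancel hm'] at h0
    rw [h0, hnm]
  have h1 : poch (-(n:ℝ)) m = (-1)^m * (m.factorial : ℝ) * (n.choose m : ℝ) :=
    poch_neg_nat n m hm'
  have h2 : poch (1+a+b-c-(n:ℝ)) m = (-1)^m * poch (c-a-b+(n:ℝ)-m) m := by
    rw [show (1+a+b-c-(n:ℝ)) = -(c-a-b+(n:ℝ)-1) from by ring, poch_reflect,
      show (c-a-b+(n:ℝ)-1) - m + 1 = c-a-b+(n:ℝ)-m from by ring]
  have hcm := hc m hm'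
  have hxm := hd m hm'
  have hem : poch (c-a-b+(n:ℝ)-m) m ≠ 0 := by
    intro h0
    apply hxm
    rw [show (1+a+b-c-(n:ℝ)) = 1+a+b-c-(n:ℝ) from rfl]
    rw [h2, h0, mul_zero]
  have hcnm : poch (c + m) (n-m) ≠ 0 := by
    intro h0; exact hcn (by rw [hsplitc, h0, mul_zero])
  have henm : poch (c-a-b) (n-m) ≠ 0 := by
    intro h0; exact hcab (by rw [hsplite, h0, zero_mul])
  have hfac : (m.factorial : ℝ) ≠ 0 := Nat.cast_ne_zero.mpr (Nat.factorial_ne_zero m)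
  have hsgn : ((-1:ℝ))^m ≠ 0 := pow_ne_zero m (by norm_num)
  rw [h1, h2, hsplitc, hsplite]
  simp only [T]
  rw [show c-a-b + ((n:ℝ)-m) = c-a-b+(n:ℝ)-m from by ring]
  field_simp
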